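/- Let X = {x_1, …, x_n} be a universe, S_in ⊆ X a fixed input set of size n_in ≥ 2, and let S_out be a uniformly random subset of S_in of size n_out (sampled without replacement). Let K ∈ ℝ^{n×n} be symmetric positive semidefinite with maximum absolute entry ‖K‖_max. Then for every u ∈ ℝ^n, E[exp(uᵀ K (p_in − q_out))] ≤ exp((‖K‖_max/(2 n_out))·uᵀ K u); that is, uniform subsampling is a (K, √(‖K‖_max/n_out), 0)-sub-Gaussian thinning algorithm. -/

import Mathlib

set_option maxHeartbeats 1000000

open MeasureTheory Matrix Finset

noncomputable section

/-- Probability vector of a finite index set: mass `1/|S|` on each element of `S`. -/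
def probVec {n : ℕ} (S : Finset (Fin n)) : Fin n → ℝ :=
  fun i => if i ∈ S then ((S.card : ℝ))⁻¹ else 0

section Aux
variable {ι : Type*} [DecidableEq ι]

lemma sumR (S : Finset ι) (r : ℕ) (f : Finset ι → ι → ℝ) :
    ∑ U ∈ S.powersetCard (r+1), ∑ i ∈ U, f (U.erase i) i
      = ∑ W ∈ S.powersetCard r, ∑ i ∈ S \ W, f W i := by
  rw [Finset.sum_sigma' (S.powersetCard (r+1)) (fun U => U) (fun U i => f (U.erase i) i),
      Finset.sum_sigma' (S.powersetCard r) (fun W => S \ W) (fun W i => f W i)]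
  refine Finset.sum_nbij' (fun x => ⟨x.1.erase x.2, x.2⟩) (fun x => ⟨insert x.2 x.1, x.2⟩)
    ?_ ?_ ?_ ?_ ?_
  · rintro ⟨U, i⟩ h
    simp only [Finset.mem_sigma, Finset.mem_powersetCard] at h ⊢
    obtain ⟨⟨hUS, hUc⟩, hiU⟩ := h
    refine ⟨⟨(Finset.erase_subset _ _).trans hUS, ?_⟩, ?_⟩
    · rw [Finset.card_erase_of_mem hiU, hUc]; rfl
    · simp [Finset.mem_sdiff, hUS hiU]
  · rintro ⟨W, i⟩ h
    simp only [Finset.mem_sigma, Finset.mem_powersetCard, Finset.mem_sdiff] at h ⊢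
    obtain ⟨⟨hWS, hWc⟩, hiS, hiW⟩ := h
    refine ⟨⟨Finset.insert_subset hiS hWS, ?_⟩, Finset.mem_insert_self _ _⟩
    rw [Finset.card_insert_of_notMem hiW, hWc]
  · rintro ⟨U, i⟩ h
    simp only [Finset.mem_sigma] at h
    simp [Finset.insert_erase h.2]
  · rintro ⟨W, i⟩ h
    simp only [Finset.mem_sigma, Finset.mem_sdiff] at h
    simp [Finset.erase_insert h.2.2]
  · rintro ⟨U, i⟩ _; rfl

/-- `(r+1) * E_{r+1} = ∑_W ∑_{i ∉ W} b i * ∏_W b`. -/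
lemma Ek_succ (S : Finset ι) (b : ι → ℝ) (r : ℕ) :
    ((r:ℝ)+1) * ∑ U ∈ S.powersetCard (r+1), ∏ j ∈ U, b j
      = ∑ W ∈ S.powersetCard r, ∑ i ∈ S \ W, b i * ∏ j ∈ W, b j := by
  rw [← sumR S r (fun W i => b i * ∏ j ∈ W, b j), Finset.mul_sum]
  refine Finset.sum_congr rfl fun U hU => ?_
  have hcard : U.card = r + 1 := (Finset.mem_powersetCard.mp hU).2
  calc ((r:ℝ)+1) * ∏ j ∈ U, b j = ∑ _i ∈ U, ∏ j ∈ U, b j := by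
        rw [Finset.sum_const, hcard]; push_cast; ring
    _ = ∑ i ∈ U, b i * ∏ j ∈ U.erase i, b j :=
        Finset.sum_congr rfl fun i hi => (Finset.mul_prod_erase U b hi).symm

/-- `F_{r+1} = ∑_W ∑_{i ∉ W} (b i)^2 * ∏_W b`. -/
lemma Fk_eq (S : Finset ι) (b : ι → ℝ) (r : ℕ) :
    ∑ U ∈ S.powersetCard (r+1), (∑ i ∈ U, b i) * ∏ j ∈ U, b j
      = ∑ W ∈ S.powersetCard r, ∑ i ∈ S \ W, (b i)^2 * ∏ j ∈ W, b j := by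
  rw [← sumR S r (fun W i => (b i)^2 * ∏ j ∈ W, b j)]
  refine Finset.sum_congr rfl fun U hU => ?_
  rw [Finset.sum_mul]
  refine Finset.sum_congr rfl fun i hi => ?_
  rw [← Finset.mul_prod_erase U b hi]; ring

lemma sdiff_erase_aux {S T : Finset ι} (j : ι) (hT : T ⊆ S) (hj : j ∈ T) :
    (S \ T.erase j).erase j = S \ T := by
  ext x
  simp only [Finset.mem_erase, Finset.mem_sdiff]
  constructor
  · rintro ⟨hxj, hxS, hx⟩
    exact ⟨hxS, fun hxT => hx ⟨hxj, hxT⟩⟩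
  · rintro ⟨hxS, hxT⟩
    exact ⟨fun h => hxT (h ▸ hj), hxS, fun h => hxT h.2⟩

/-- `(l+1) * ∑_{T ∈ pc (l+1)} G(T) ∏_T b = ∑_W (G(W)^2 - H(W)) ∏_W b`. -/
lemma app3 (S : Finset ι) (b : ι → ℝ) (l : ℕ) :
    ((l:ℝ)+1) * ∑ T ∈ S.powersetCard (l+1), (∑ i ∈ S \ T, b i) * ∏ j ∈ T, b j
      = ∑ W ∈ S.powersetCard l,
          ((∑ i ∈ S \ W, b i)^2 - ∑ i ∈ S \ W, (b i)^2) * ∏ j ∈ W, b j := by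
  have key := sumR S l (fun W j => b j * (∑ i ∈ (S \ W).erase j, b i) * ∏ j' ∈ W, b j')
  have lhs_eq : ∑ U ∈ S.powersetCard (l+1), ∑ j ∈ U,
      (fun W j => b j * (∑ i ∈ (S \ W).erase j, b i) * ∏ j' ∈ W, b j') (U.erase j) j
      = ((l:ℝ)+1) * ∑ T ∈ S.powersetCard (l+1), (∑ i ∈ S \ T, b i) * ∏ j ∈ T, b j := by
    rw [Finset.mul_sum]
    refine Finset.sum_congr rfl fun T hT => ?_
    obtain ⟨hTS, hTc⟩ := Finset.mem_powersetCard.mp hT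
    have : ∀ j ∈ T, b j * (∑ i ∈ (S \ T.erase j).erase j, b i) * ∏ j' ∈ T.erase j, b j'
        = (∑ i ∈ S \ T, b i) * ∏ j' ∈ T, b j' := by
      intro j hj
      rw [sdiff_erase_aux j hTS hj, ← Finset.mul_prod_erase T b hj]; ring
    rw [Finset.sum_congr rfl this, Finset.sum_const, hTc]
    push_cast; ring
  rw [lhs_eq] at key
  rw [key]
  refine Finset.sum_congr rfl fun W _hW => ?_
  have : ∀ j ∈ S \ W, (b j * ∑ i ∈ (S \ W).erase j, b i) * ∏ j' ∈ W, b j'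
      = (b j * (∑ i ∈ S \ W, b i) - (b j)^2) * ∏ j' ∈ W, b j' := by
    intro j hj
    rw [← Finset.add_sum_erase _ b hj]; ring
  rw [Finset.sum_congr rfl this, ← Finset.sum_mul, Finset.sum_sub_distrib,
    ← Finset.sum_mul]
  ring

/-- Identity I1: `(∑_S b) * E_k = (k+1) E_{k+1} + F_k`. -/
lemma I1 (S : Finset ι) (b : ι → ℝ) (k : ℕ) :
    (∑ i ∈ S, b i) * ∑ T ∈ S.powersetCard k, ∏ j ∈ T, b j
      = ((k:ℝ)+1) * (∑ U ∈ S.powersetCard (k+1), ∏ j ∈ U, b j)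
        + ∑ T ∈ S.powersetCard k, (∑ i ∈ T, b i) * ∏ j ∈ T, b j := by
  rw [Ek_succ S b k, Finset.mul_sum]
  rw [← Finset.sum_add_distrib]
  refine Finset.sum_congr rfl fun T hT => ?_
  obtain ⟨hTS, _⟩ := Finset.mem_powersetCard.mp hT
  have : ∑ i ∈ S, b i = (∑ i ∈ S \ T, b i) + ∑ i ∈ T, b i :=
    (Finset.sum_sdiff hTS).symm
  rw [this, add_mul, Finset.sum_mul]

/-- Key inequality: `k (k+1) E_{k+1} ≤ (m-k) F_k`. -/
lemma KIpp (S : Finset ι) (b : ι → ℝ) (hb : ∀ i ∈ S, 0 ≤ b i) (k : ℕ)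
    (hk : k + 1 ≤ S.card) :
    (k:ℝ)*((k:ℝ)+1) * ∑ U ∈ S.powersetCard (k+1), ∏ j ∈ U, b j
      ≤ ((S.card:ℝ) - k) * ∑ T ∈ S.powersetCard k, (∑ i ∈ T, b i) * ∏ j ∈ T, b j := by
  cases k with
  | zero => simp
  | succ l =>
    have e1 : ((l:ℝ)+1+1) * ∑ U ∈ S.powersetCard (l+1+1), ∏ j ∈ U, b j
        = ∑ T ∈ S.powersetCard (l+1), (∑ i ∈ S \ T, b i) * ∏ j ∈ T, b j := by
      have h := Ek_succ S b (l+1)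
      push_cast at h
      rw [h]
      exact Finset.sum_congr rfl fun T _ => (Finset.sum_mul _ _ _).symm
    have e2 : ((l:ℝ)+1)*(((l:ℝ)+1)+1) * ∑ U ∈ S.powersetCard (l+1+1), ∏ j ∈ U, b j
        = ∑ W ∈ S.powersetCard l,
            ((∑ i ∈ S \ W, b i)^2 - ∑ i ∈ S \ W, (b i)^2) * ∏ j ∈ W, b j := by
      rw [mul_assoc, e1, app3]
    have e3 : ((S.card:ℝ) - (↑l+1)) * ∑ T ∈ S.powersetCard (l+1),
          (∑ i ∈ T, b i) * ∏ j ∈ T, b j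
        = ∑ W ∈ S.powersetCard l,
            (((S.card:ℝ) - (↑l+1)) * ∑ i ∈ S \ W, (b i)^2) * ∏ j ∈ W, b j := by
      rw [Fk_eq S b l, Finset.mul_sum]
      refine Finset.sum_congr rfl fun W _ => ?_
      rw [← Finset.sum_mul]
      ring
    have goal2 : ∑ W ∈ S.powersetCard l,
            ((∑ i ∈ S \ W, b i)^2 - ∑ i ∈ S \ W, (b i)^2) * ∏ j ∈ W, b j
        ≤ ∑ W ∈ S.powersetCard l,
            (((S.card:ℝ) - (↑l+1)) * ∑ i ∈ S \ W, (b i)^2) * ∏ j ∈ W, b j := by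
      refine Finset.sum_le_sum fun W hW => ?_
      obtain ⟨hWS, hWc⟩ := Finset.mem_powersetCard.mp hW
      have hprod : (0:ℝ) ≤ ∏ j ∈ W, b j :=
        Finset.prod_nonneg fun j hj => hb j (hWS hj)
      refine mul_le_mul_of_nonneg_right ?_ hprod
      have hCS : (∑ i ∈ S \ W, b i)^2 ≤ ((S \ W).card : ℝ) * ∑ i ∈ S \ W, (b i)^2 := by
        have := Finset.sum_mul_sq_le_sq_mul_sq (S \ W) (fun _ => (1:ℝ)) b
        simpa [Finset.sum_const, nsmul_eq_mul, mul_comm] using this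
      have hcard : ((S \ W).card : ℝ) = (S.card : ℝ) - l := by
        rw [Finset.card_sdiff_of_subset hWS, hWc, Nat.cast_sub (by omega)]
      have hH : (0:ℝ) ≤ ∑ i ∈ S \ W, (b i)^2 :=
        Finset.sum_nonneg fun i _ => sq_nonneg _
      rw [hcard] at hCS
      nlinarith [hH]
    calc (↑(l+1):ℝ)*((↑(l+1):ℝ)+1) * ∑ U ∈ S.powersetCard (l+1+1), ∏ j ∈ U, b j
        = ((l:ℝ)+1)*(((l:ℝ)+1)+1) * ∑ U ∈ S.powersetCard (l+1+1), ∏ j ∈ U, b j := by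
          push_cast; ring_nf
      _ ≤ ∑ W ∈ S.powersetCard l,
            (((S.card:ℝ) - (↑l+1)) * ∑ i ∈ S \ W, (b i)^2) * ∏ j ∈ W, b j := by
          rw [e2]; exact goal2
      _ = ((S.card:ℝ) - ↑(l+1)) * ∑ T ∈ S.powersetCard (l+1),
            (∑ i ∈ T, b i) * ∏ j ∈ T, b j := by
          rw [← e3]; push_cast; ring_nf

/-- Maclaurin-type inequality: `E_k * m^k ≤ C(m,k) * (∑ b)^k` for nonnegative `b`. -/
lemma maclaurin (S : Finset ι) (b : ι → ℝ) (hb : ∀ i ∈ S, 0 ≤ b i) :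
    ∀ k, k ≤ S.card →
      (∑ T ∈ S.powersetCard k, ∏ i ∈ T, b i) * (S.card : ℝ)^k
        ≤ (S.card.choose k : ℝ) * (∑ i ∈ S, b i)^k := by
  intro k
  induction k with
  | zero => intro _; simp
  | succ k ih =>
    intro hk1
    have hk : k ≤ S.card := Nat.le_of_succ_le hk1
    have IH := ih hk
    have hbs : 0 ≤ ∑ i ∈ S, b i := Finset.sum_nonneg hb
    have hmk : (0:ℝ) ≤ (S.card:ℝ) - k := by
      have : (k:ℝ) + 1 ≤ (S.card:ℝ) := by exact_mod_cast hk1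
      linarith
    set A : ℝ := ((k:ℝ)+1) * ∑ U ∈ S.powersetCard (k+1), ∏ j ∈ U, b j with hA
    set F : ℝ := ∑ T ∈ S.powersetCard k, (∑ i ∈ T, b i) * ∏ j ∈ T, b j with hF
    set Ek : ℝ := ∑ T ∈ S.powersetCard k, ∏ i ∈ T, b i with hEk
    have i1 : (∑ i ∈ S, b i) * Ek = A + F := I1 S b k
    have ki : (k:ℝ) * A ≤ ((S.card:ℝ) - k) * F := by
      calc (k:ℝ) * A = (k:ℝ)*((k:ℝ)+1) * ∑ U ∈ S.powersetCard (k+1), ∏ j ∈ U, b j := by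
            rw [hA]; ring
        _ ≤ ((S.card:ℝ) - k) * F := KIpp S b hb k hk1
    have key : A * (S.card:ℝ) ≤ ((S.card:ℝ) - k) * ((∑ i ∈ S, b i) * Ek) := by
      calc A * (S.card:ℝ) = ((S.card:ℝ) - k) * A + (k:ℝ) * A := by ring
        _ ≤ ((S.card:ℝ) - k) * A + ((S.card:ℝ) - k) * F := by linarith
        _ = ((S.card:ℝ) - k) * (A + F) := by ring
        _ = ((S.card:ℝ) - k) * ((∑ i ∈ S, b i) * Ek) := by rw [i1]
    -- multiply by m^k and use IH
    have hmpow : (0:ℝ) ≤ (S.card:ℝ)^k := by positivity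
    have step1 : A * (S.card:ℝ)^(k+1)
        ≤ ((S.card:ℝ) - k) * (∑ i ∈ S, b i) * (Ek * (S.card:ℝ)^k) := by
      calc A * (S.card:ℝ)^(k+1) = (A * (S.card:ℝ)) * (S.card:ℝ)^k := by ring
        _ ≤ (((S.card:ℝ) - k) * ((∑ i ∈ S, b i) * Ek)) * (S.card:ℝ)^k :=
            mul_le_mul_of_nonneg_right key hmpow
        _ = ((S.card:ℝ) - k) * (∑ i ∈ S, b i) * (Ek * (S.card:ℝ)^k) := by ring
    have step2 : ((S.card:ℝ) - k) * (∑ i ∈ S, b i) * (Ek * (S.card:ℝ)^k)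
        ≤ ((S.card:ℝ) - k) * (∑ i ∈ S, b i) * ((S.card.choose k : ℝ) * (∑ i ∈ S, b i)^k) :=
      mul_le_mul_of_nonneg_left IH (mul_nonneg hmk hbs)
    have cast_choose : ((S.card:ℝ) - k) * (S.card.choose k : ℝ)
        = ((k:ℝ)+1) * (S.card.choose (k+1) : ℝ) := by
      have := Nat.choose_succ_right_eq S.card k
      have h2 : ((S.card.choose (k+1) * (k+1) : ℕ) : ℝ) = ((S.card.choose k * (S.card - k) : ℕ) : ℝ) := by
        exact_mod_cast congrArg (Nat.cast (R := ℝ)) this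
      push_cast [Nat.cast_sub hk] at h2
      linarith
    have final : A * (S.card:ℝ)^(k+1)
        ≤ ((k:ℝ)+1) * ((S.card.choose (k+1) : ℝ) * (∑ i ∈ S, b i)^(k+1)) := by
      calc A * (S.card:ℝ)^(k+1)
          ≤ ((S.card:ℝ) - k) * (∑ i ∈ S, b i) * ((S.card.choose k : ℝ) * (∑ i ∈ S, b i)^k) :=
            step1.trans step2
        _ = (((S.card:ℝ) - k) * (S.card.choose k : ℝ)) * (∑ i ∈ S, b i)^(k+1) := by ring
        _ = ((k:ℝ)+1) * ((S.card.choose (k+1) : ℝ) * (∑ i ∈ S, b i)^(k+1)) := by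
            rw [cast_choose]; ring
    have hkpos : (0:ℝ) < (k:ℝ) + 1 := by positivity
    refine le_of_mul_le_mul_left ?_ hkpos
    calc ((k:ℝ)+1) * ((∑ T ∈ S.powersetCard (k+1), ∏ i ∈ T, b i) * (S.card:ℝ)^(k+1))
        = A * (S.card:ℝ)^(k+1) := by rw [hA]; ring
      _ ≤ ((k:ℝ)+1) * ((S.card.choose (k+1) : ℝ) * (∑ i ∈ S, b i)^(k+1)) := final


/-- Analytic core of Hoeffding's lemma:
`(1-p) e^{-ph} + p e^{(1-p)h} ≤ e^{h²/8}` for `p ∈ [0,1]`, `h ≥ 0`. -/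
lemma hoeff_aux (p h : ℝ) (hp0 : 0 ≤ p) (hp1 : p ≤ 1) (hh : 0 ≤ h) :
    (1-p) * Real.exp (-(p*h)) + p * Real.exp ((1-p)*h) ≤ Real.exp (h^2/8) := by
  set D : ℝ → ℝ := fun t => 1 - p + p * Real.exp t with hDdef
  have hDPos : ∀ t, 0 < D t := by
    intro t
    rcases lt_or_eq_of_le hp0 with hp | hp
    · have := Real.exp_pos t
      simp only [hDdef]
      nlinarith
    · simp only [hDdef, ← hp]
      norm_num
  set φ : ℝ → ℝ := fun t => Real.log (D t) - p * t with hφdef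
  set φ₁ : ℝ → ℝ := fun t => p * Real.exp t / D t - p with hφ₁def
  have hD : ∀ t, HasDerivAt D (p * Real.exp t) t := by
    intro t
    exact ((Real.hasDerivAt_exp t).const_mul p).const_add (1-p)
  have hφ : ∀ t, HasDerivAt φ (φ₁ t) t := by
    intro t
    have h1 : HasDerivAt (fun t : ℝ => p * t) p t := by
      simpa using (hasDerivAt_id t).const_mul p
    have h2 : HasDerivAt (fun t => Real.log (D t)) (p * Real.exp t / D t) t :=
      (hD t).log (ne_of_gt (hDPos t))
    exact h2.sub h1
  have hφ₁ : ∀ t, HasDerivAt φ₁ (p * (1-p) * Real.exp t / (D t)^2) t := by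
    intro t
    have h1 : HasDerivAt (fun t => p * Real.exp t) (p * Real.exp t) t :=
      (Real.hasDerivAt_exp t).const_mul p
    have h2 : HasDerivAt (fun t => p * Real.exp t / D t)
        ((p * Real.exp t * D t - p * Real.exp t * (p * Real.exp t)) / (D t)^2) t :=
      h1.div (hD t) (ne_of_gt (hDPos t))
    have heq : (p * Real.exp t * D t - p * Real.exp t * (p * Real.exp t)) / (D t)^2
        = p * (1-p) * Real.exp t / (D t)^2 := by
      rw [hDdef]; ring_nf
    rw [heq] at h2
    exact h2.sub_const p
  have hφ₂le : ∀ t, p * (1-p) * Real.exp t / (D t)^2 ≤ 1/4 := by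
    intro t
    rw [div_le_iff₀ (pow_pos (hDPos t) 2)]
    have h1 : (0:ℝ) ≤ (1 - p - p * Real.exp t)^2 := sq_nonneg _
    simp only [hDdef]
    nlinarith [Real.exp_pos t]
  have hη : ∀ x : ℝ, HasDerivAt (fun t : ℝ => t/4 - φ₁ t)
      (1/4 - p * (1-p) * Real.exp x / (D x)^2) x := by
    intro x
    have h1 : HasDerivAt (fun t : ℝ => t/4) ((1:ℝ)/4) x := by
      simpa using (hasDerivAt_id x).div_const 4
    exact h1.sub (hφ₁ x)
  have hφ₁le : ∀ t, 0 ≤ t → φ₁ t ≤ t/4 := by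
    intro t ht
    have hmono : Monotone (fun t : ℝ => t/4 - φ₁ t) := by
      apply monotone_of_deriv_nonneg
      · intro x
        exact (hη x).differentiableAt
      · intro x
        rw [(hη x).deriv]
        have := hφ₂le x
        linarith
    have h0 : (fun t : ℝ => t/4 - φ₁ t) 0 = 0 := by
      simp [hφ₁def, hDdef]
    have := hmono ht
    rw [h0] at this
    simpa using this
  have hζ : ∀ x : ℝ, HasDerivAt (fun t => t^2/8 - φ t) (x/4 - φ₁ x) x := by
    intro x
    have h1 : HasDerivAt (fun t : ℝ => t^2/8) (x/4) x := by
      have := (hasDerivAt_pow 2 x).div_const 8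
      norm_num at this
      exact this.congr_deriv (by ring)
    exact h1.sub (hφ x)
  have hφle : φ h ≤ h^2/8 := by
    have hmono : MonotoneOn (fun t => t^2/8 - φ t) (Set.Ici (0:ℝ)) := by
      apply monotoneOn_of_deriv_nonneg (convex_Ici 0)
      · exact (Differentiable.continuous fun x => (hζ x).differentiableAt).continuousOn
      · exact fun x _ => ((hζ x).differentiableAt).differentiableWithinAt
      · intro x hx
        rw [(hζ x).deriv]
        have hxpos : (0:ℝ) < x := by simpa [interior_Ici] using hx
        have := hφ₁le x hxpos.le
        linarith
    have h0 : (fun t : ℝ => t^2/8 - φ t) 0 = 0 := by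
      simp [hφdef, hDdef]
    have := hmono (Set.self_mem_Ici) (Set.mem_Ici.mpr hh) hh
    rw [h0] at this
    simp only at this
    linarith [this]
  have hval : (1-p) * Real.exp (-(p*h)) + p * Real.exp ((1-p)*h) = Real.exp (φ h) := by
    show _ = Real.exp (Real.log (D h) - p * h)
    rw [Real.exp_sub, Real.exp_log (hDPos h)]
    rw [show (1-p)*h = h - p*h by ring, Real.exp_sub, Real.exp_neg]
    have hE : Real.exp (p*h) ≠ 0 := Real.exp_ne_zero _
    field_simp
    rfl
  rw [hval]
  exact Real.exp_le_exp.mpr hφle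

/-- Hoeffding's lemma for the uniform distribution on a finite set. -/
lemma hoeffding_finite {ι : Type*} (S : Finset ι) (hS : S.Nonempty) (c : ι → ℝ)
    (hsum : ∑ i ∈ S, c i = 0) (a b : ℝ) (hbd : ∀ i ∈ S, a ≤ c i ∧ c i ≤ b) :
    ∑ i ∈ S, Real.exp (c i) ≤ (S.card : ℝ) * Real.exp ((b-a)^2/8) := by
  obtain ⟨i₀, hi₀⟩ := hS
  have hab : a ≤ b := le_trans (hbd i₀ hi₀).1 (hbd i₀ hi₀).2
  have hcard : (0:ℝ) < (S.card : ℝ) := by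
    exact_mod_cast Finset.card_pos.mpr ⟨i₀, hi₀⟩
  rcases eq_or_lt_of_le hab with heq | hlt
  · have hca : ∀ i ∈ S, c i = a := fun i hi =>
      le_antisymm (heq ▸ (hbd i hi).2) (hbd i hi).1
    have hsa : ∑ i ∈ S, c i = (S.card : ℝ) * a := by
      rw [Finset.sum_congr rfl hca, Finset.sum_const, nsmul_eq_mul]
    have ha : a = 0 := by
      rw [hsum] at hsa
      rcases mul_eq_zero.mp hsa.symm with h | h
      · exact absurd h (ne_of_gt hcard)
      · exact h
    calc ∑ i ∈ S, Real.exp (c i) = ∑ _i ∈ S, (1:ℝ) := by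
          refine Finset.sum_congr rfl fun i hi => ?_
          rw [hca i hi, ha, Real.exp_zero]
      _ = (S.card : ℝ) := by rw [Finset.sum_const, nsmul_eq_mul, mul_one]
      _ ≤ (S.card : ℝ) * Real.exp ((b-a)^2/8) := by
          nth_rewrite 1 [← mul_one (S.card : ℝ)]
          exact mul_le_mul_of_nonneg_left (Real.one_le_exp (by positivity)) hcard.le
  · have ha0 : a ≤ 0 := by
      by_contra hcon
      push_neg at hcon
      have : (0:ℝ) < ∑ i ∈ S, c i := by
        calc (0:ℝ) < ∑ _i ∈ S, a := by
              rw [Finset.sum_const, nsmul_eq_mul]; positivity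
          _ ≤ ∑ i ∈ S, c i := Finset.sum_le_sum fun i hi => (hbd i hi).1
      linarith [hsum ▸ this]
    have hb0 : 0 ≤ b := by
      by_contra hcon
      push_neg at hcon
      have : ∑ i ∈ S, c i < 0 := by
        calc ∑ i ∈ S, c i ≤ ∑ _i ∈ S, b := Finset.sum_le_sum fun i hi => (hbd i hi).2
          _ < 0 := by
              rw [Finset.sum_const, nsmul_eq_mul]
              exact mul_neg_of_pos_of_neg hcard hcon
      linarith [hsum ▸ this]
    have hgap0 : (0:ℝ) < b - a := by linarith
    have hgne : b - a ≠ 0 := hgap0.ne'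
    set p : ℝ := -a / (b-a) with hpdef
    have hp0 : 0 ≤ p := div_nonneg (by linarith) hgap0.le
    have hp1 : p ≤ 1 := by
      rw [hpdef, div_le_one hgap0]
      linarith
    have hpa : -(p * (b-a)) = a := by
      rw [hpdef]; field_simp
    have hpb : (1-p) * (b-a) = b := by
      rw [hpdef]; field_simp
      ring
    have hconv : ∀ i ∈ S, Real.exp (c i)
        ≤ ((b - c i)/(b-a)) * Real.exp a + ((c i - a)/(b-a)) * Real.exp b := by
      intro i hi
      obtain ⟨h1, h2⟩ := hbd i hi
      have hw1 : (0:ℝ) ≤ (b - c i)/(b-a) := div_nonneg (by linarith) hgap0.le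
      have hw2 : (0:ℝ) ≤ (c i - a)/(b-a) := div_nonneg (by linarith) hgap0.le
      have hws : (b - c i)/(b-a) + (c i - a)/(b-a) = 1 := by
        rw [← add_div, show b - c i + (c i - a) = b - a by ring]
        exact div_self hgne
      have := convexOn_exp.2 (Set.mem_univ a) (Set.mem_univ b) hw1 hw2 hws
      have harg : ((b - c i)/(b-a)) • a + ((c i - a)/(b-a)) • b = c i := by
        simp only [smul_eq_mul]
        field_simp
        ring
      rw [harg] at this
      simpa using this
    calc ∑ i ∈ S, Real.exp (c i)
        ≤ ∑ i ∈ S, (((b - c i)/(b-a)) * Real.exp a + ((c i - a)/(b-a)) * Real.exp b) :=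
          Finset.sum_le_sum hconv
      _ = (S.card : ℝ) * ((1-p) * Real.exp a + p * Real.exp b) := by
          rw [Finset.sum_add_distrib, ← Finset.sum_mul, ← Finset.sum_mul]
          have e1 : ∑ i ∈ S, (b - c i)/(b-a) = (S.card : ℝ) * (1 - p) := by
            rw [← Finset.sum_div, Finset.sum_sub_distrib, hsum, Finset.sum_const,
              nsmul_eq_mul, hpdef]
            field_simp
            ring
          have e2 : ∑ i ∈ S, (c i - a)/(b-a) = (S.card : ℝ) * p := by
            rw [← Finset.sum_div, Finset.sum_sub_distrib, hsum, Finset.sum_const,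
              nsmul_eq_mul, hpdef]
            field_simp
            ring
          rw [e1, e2]
          ring
      _ ≤ (S.card : ℝ) * Real.exp ((b-a)^2/8) := by
          refine mul_le_mul_of_nonneg_left ?_ hcard.le
          have := hoeff_aux p (b-a) hp0 hp1 hgap0.le
          rw [hpa, hpb] at this
          exact this

end Aux

theorem stmt1 {n : ℕ} {Ω : Type*} [MeasureSpace Ω]
    [IsProbabilityMeasure (volume : Measure Ω)]
    (Sin : Finset (Fin n)) (nin nout : ℕ)
    (hnin : Sin.card = nin) (hnin2 : 2 ≤ nin) (hnout1 : 1 ≤ nout) (hnout2 : nout ≤ nin)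
    (Sout : Ω → Finset (Fin n))
    (hsub : ∀ ω, Sout ω ⊆ Sin) (hcard : ∀ ω, (Sout ω).card = nout)
    (hmeas : ∀ T : Finset (Fin n), MeasurableSet {ω | Sout ω = T})
    (hunif : ∀ T : Finset (Fin n), T ⊆ Sin → T.card = nout →
      volume {ω | Sout ω = T} = ENNReal.ofReal (1 / (nin.choose nout : ℝ)))
    (K : Matrix (Fin n) (Fin n) ℝ) (hK : K.PosSemidef) :
    ∀ u : Fin n → ℝ,
      (∫ ω, Real.exp (u ⬝ᵥ (K *ᵥ (probVec Sin - probVec (Sout ω))))) ≤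
        Real.exp ((⨆ i, ⨆ j, |K i j|) / (2 * (nout : ℝ)) * (u ⬝ᵥ (K *ᵥ u))) := by
  intro u
  -- Basic setup
  have hSne : Sin.Nonempty := Finset.card_pos.mp (by omega)
  have hFinNe : Nonempty (Fin n) := ⟨hSne.choose⟩
  have hninR : (0:ℝ) < (nin:ℝ) := by exact_mod_cast Nat.lt_of_lt_of_le Nat.zero_lt_two hnin2
  have hnoutR : (0:ℝ) < (nout:ℝ) := by exact_mod_cast hnout1
  set M : ℝ := ⨆ i, ⨆ j, |K i j| with hMdef
  set Q : ℝ := u ⬝ᵥ (K *ᵥ u) with hQdef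
  have hM : ∀ a b, |K a b| ≤ M := by
    intro a b
    have h1 : |K a b| ≤ ⨆ j, |K a j| :=
      le_ciSup (f := fun j => |K a j|) (Set.Finite.bddAbove (Set.finite_range _)) b
    have h2 : (⨆ j, |K a j|) ≤ M :=
      le_ciSup (f := fun i => ⨆ j, |K i j|) (Set.Finite.bddAbove (Set.finite_range _)) a
    linarith
  have hM0 : 0 ≤ M := le_trans (abs_nonneg _) (hM hSne.choose hSne.choose)
  have hQ0 : 0 ≤ Q := by
    have := hK.dotProduct_mulVec_nonneg u
    simpa [hQdef] using this
  have hsymm : ∀ i j, K i j = K j i := by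
    intro i j
    have := congrFun (congrFun hK.1 j) i
    simpa [Matrix.conjTranspose_apply] using this
  -- the linear functional v
  set v : Fin n → ℝ := fun j => ∑ i, u i * K i j with hvdef
  have hdot : ∀ w : Fin n → ℝ, u ⬝ᵥ (K *ᵥ w) = ∑ j, v j * w j := by
    intro w
    simp only [dotProduct, Matrix.mulVec, Finset.mul_sum, hvdef]
    rw [Finset.sum_comm]
    refine Finset.sum_congr rfl fun j _ => ?_
    rw [Finset.sum_mul]
    refine Finset.sum_congr rfl fun i _ => ?_
    ring
  have hsymK : ∀ x y : Fin n → ℝ, x ⬝ᵥ (K *ᵥ y) = y ⬝ᵥ (K *ᵥ x) := by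
    intro x y
    simp only [dotProduct, Matrix.mulVec, Finset.mul_sum]
    rw [Finset.sum_comm]
    refine Finset.sum_congr rfl fun a _ => Finset.sum_congr rfl fun b _ => ?_
    rw [hsymm b a]
    ring
  set R : ℝ := Real.sqrt (M * Q) with hRdef
  have hR0 : 0 ≤ R := Real.sqrt_nonneg _
  have hR2 : R^2 = M * Q := Real.sq_sqrt (mul_nonneg hM0 hQ0)
  -- Cauchy-Schwarz bound on increments of v
  have hvij : ∀ i j : Fin n, v i - v j ≤ 2 * R := by
    intro i j
    set w : Fin n → ℝ := fun t => (if t = i then (1:ℝ) else 0) - (if t = j then 1 else 0)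
      with hwdef
    have hKw : ∀ a, (K *ᵥ w) a = K a i - K a j := by
      intro a
      simp [Matrix.mulVec, dotProduct, hwdef, mul_sub, Finset.sum_sub_distrib,
        mul_ite, mul_one, mul_zero]
    have hC : u ⬝ᵥ (K *ᵥ w) = v i - v j := by
      simp only [dotProduct]
      rw [Finset.sum_congr rfl (fun a _ => by rw [hKw a])]
      simp only [mul_sub, Finset.sum_sub_distrib, hvdef]
    have hP : w ⬝ᵥ (K *ᵥ w) = K i i - K i j - (K j i - K j j) := by
      simp only [dotProduct]
      rw [Finset.sum_congr rfl (fun a _ => by rw [hKw a])]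
      simp [hwdef, sub_mul, Finset.sum_sub_distrib, ite_mul, one_mul, zero_mul,
        Finset.sum_ite_eq']
    set P : ℝ := w ⬝ᵥ (K *ᵥ w) with hPdef
    set C' : ℝ := u ⬝ᵥ (K *ᵥ w) with hC'def
    have hquad : ∀ t : ℝ, 0 ≤ P * (t * t) + (2 * C') * t + Q := by
      intro t
      have h0 := hK.dotProduct_mulVec_nonneg (u + t • w)
      have hexp : (u + t • w) ⬝ᵥ (K *ᵥ (u + t • w)) = P * (t * t) + (2 * C') * t + Q := by
        rw [Matrix.mulVec_add, Matrix.mulVec_smul]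
        simp only [add_dotProduct, dotProduct_add, smul_dotProduct,
          dotProduct_smul, smul_eq_mul, smul_smul]
        rw [hsymK w u]
        simp only [hPdef, hC'def, hQdef]
        ring
      have h0' : 0 ≤ (u + t • w) ⬝ᵥ (K *ᵥ (u + t • w)) := by simpa using h0
      rw [hexp] at h0'
      exact h0'
    have hdisc := discrim_le_zero hquad
    rw [discrim] at hdisc
    have hCP : C'^2 ≤ P * Q := by nlinarith [hdisc]
    have hP4 : P ≤ 4 * M := by
      have h1 := abs_le.mp (hM i i)
      have h2 := abs_le.mp (hM i j)
      have h3 := abs_le.mp (hM j i)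
      have h4 := abs_le.mp (hM j j)
      rw [hP]
      linarith
    have hC2 : C'^2 ≤ 4 * (M * Q) := by nlinarith [hP4, hQ0, hCP]
    have : C' ≤ 2 * R := by nlinarith [hR2, hR0, hC2]
    rw [hC] at this
    exact this
  -- reduce the integral to a finite sum
  set F : Finset (Fin n) → ℝ :=
    fun T => Real.exp (u ⬝ᵥ (K *ᵥ (probVec Sin - probVec T))) with hFdef
  set 𝒯 : Finset (Finset (Fin n)) := Sin.powersetCard nout with h𝒯def
  set Cn : ℝ := (nin.choose nout : ℝ) with hCndef
  have hCnpos : (0:ℝ) < Cn := by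
    rw [hCndef]
    exact_mod_cast Nat.choose_pos hnout2
  have hFrw : (fun ω => Real.exp (u ⬝ᵥ (K *ᵥ (probVec Sin - probVec (Sout ω)))))
      = fun ω => ∑ T : Finset (Fin n),
          Set.indicator {ω' | Sout ω' = T} (fun _ => F T) ω := by
    funext ω
    rw [Finset.sum_eq_single (Sout ω)]
    · simp [Set.indicator_apply, hFdef]
    · intro T _ hT
      rw [Set.indicator_apply]
      rw [if_neg (by simp; exact fun h => hT h.symm)]
    · intro h
      exact absurd (Finset.mem_univ _) h
  have hInt : (∫ ω, Real.exp (u ⬝ᵥ (K *ᵥ (probVec Sin - probVec (Sout ω)))))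
      = ∑ T ∈ 𝒯, (1 / Cn) * F T := by
    rw [hFrw]
    rw [MeasureTheory.integral_finset_sum Finset.univ
      (fun T _ => (MeasureTheory.integrable_const (F T)).indicator (hmeas T))]
    have hterm : ∀ T : Finset (Fin n),
        (∫ ω, Set.indicator {ω' | Sout ω' = T} (fun _ => F T) ω)
          = (volume {ω' | Sout ω' = T}).toReal * F T := by
      intro T
      rw [MeasureTheory.integral_indicator_const (F T) (hmeas T), smul_eq_mul]
      rfl
    rw [Finset.sum_congr rfl (fun T _ => hterm T)]
    rw [← Finset.sum_subset (Finset.subset_univ 𝒯)]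
    · refine Finset.sum_congr rfl fun T hT => ?_
      obtain ⟨hTs, hTc⟩ := Finset.mem_powersetCard.mp hT
      rw [hunif T hTs hTc, ENNReal.toReal_ofReal (by positivity)]
    · intro T _ hT
      have hempty : {ω' | Sout ω' = T} = ∅ := by
        ext ω
        simp only [Set.mem_setOf_eq, Set.mem_empty_iff_false, iff_false]
        intro h
        exact hT (by
          rw [h𝒯def, Finset.mem_powersetCard]
          exact ⟨h ▸ hsub ω, h ▸ hcard ω⟩)
      rw [hempty]
      simp
  -- rewrite F T as a product
  set vbar : ℝ := (∑ j ∈ Sin, v j) / nin with hvbardef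
  set cf : Fin n → ℝ := fun j => (vbar - v j) / nout with hcfdef
  set bf : Fin n → ℝ := fun j => Real.exp (cf j) with hbfdef
  have hbf0 : ∀ j ∈ Sin, 0 ≤ bf j := fun j _ => (Real.exp_pos _).le
  have hFT : ∀ T ∈ 𝒯, F T = ∏ j ∈ T, bf j := by
    intro T hT
    obtain ⟨hTs, hTc⟩ := Finset.mem_powersetCard.mp hT
    simp only [hFdef]
    have hexp : u ⬝ᵥ (K *ᵥ (probVec Sin - probVec T)) = ∑ j ∈ T, cf j := by
      rw [hdot]
      have hlhs : ∑ j, v j * (probVec Sin - probVec T) j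
          = (∑ j ∈ Sin, v j) * (nin:ℝ)⁻¹ - (∑ j ∈ T, v j) * (nout:ℝ)⁻¹ := by
        simp only [Pi.sub_apply, probVec, mul_sub, Finset.sum_sub_distrib,
          mul_ite, mul_zero]
        rw [Finset.sum_ite_mem, Finset.sum_ite_mem, Finset.univ_inter, Finset.univ_inter]
        rw [hnin, hTc, ← Finset.sum_mul, ← Finset.sum_mul]
      rw [hlhs]
      have hrhs : ∑ j ∈ T, cf j = (nout:ℝ) * vbar / nout - (∑ j ∈ T, v j) / nout := by
        simp only [hcfdef]
        rw [← Finset.sum_div, Finset.sum_sub_distrib, Finset.sum_const, hTc,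
          nsmul_eq_mul, sub_div]
      rw [hrhs, hvbardef]
      field_simp
    rw [hexp, Real.exp_sum]
  -- sum of cf over Sin is zero
  have hsum0 : ∑ j ∈ Sin, cf j = 0 := by
    simp only [hcfdef]
    rw [← Finset.sum_div, Finset.sum_sub_distrib, Finset.sum_const, hnin, nsmul_eq_mul,
      hvbardef]
    field_simp
    ring
  -- bounds on cf over Sin
  set vmax : ℝ := Sin.sup' hSne v with hvmaxdef
  set vmin : ℝ := Sin.inf' hSne v with hvmindef
  set aa : ℝ := (vbar - vmax) / nout with haadef
  set bb : ℝ := (vbar - vmin) / nout with hbbdef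
  have hbd : ∀ j ∈ Sin, aa ≤ cf j ∧ cf j ≤ bb := by
    intro j hj
    constructor
    · simp only [haadef, hcfdef]
      have : v j ≤ vmax := Finset.le_sup' v hj
      gcongr
    · simp only [hbbdef, hcfdef]
      have : vmin ≤ v j := Finset.inf'_le v hj
      gcongr
  have hdmax : vmax - vmin ≤ 2 * R := by
    obtain ⟨i, hi, hieq⟩ := Finset.exists_mem_eq_sup' hSne v
    obtain ⟨j, hj, hjeq⟩ := Finset.exists_mem_eq_inf' hSne v
    rw [hvmaxdef, hvmindef, hieq, hjeq]
    exact hvij i j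
  have hd0 : 0 ≤ vmax - vmin := by
    obtain ⟨i, hi⟩ := hSne
    have h1 : v i ≤ vmax := Finset.le_sup' v hi
    have h2 : vmin ≤ v i := Finset.inf'_le v hi
    linarith
  -- Hoeffding
  have hhoeff : ∑ j ∈ Sin, bf j ≤ (nin:ℝ) * Real.exp ((bb - aa)^2 / 8) := by
    have := hoeffding_finite Sin hSne cf hsum0 aa bb hbd
    rw [hnin] at this
    exact this
  -- Maclaurin
  have hmac : (∑ T ∈ 𝒯, ∏ j ∈ T, bf j) * (nin:ℝ)^nout
      ≤ Cn * (∑ j ∈ Sin, bf j)^nout := by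
    have := maclaurin Sin bf hbf0 nout (by rw [hnin]; exact hnout2)
    rw [hnin] at this
    exact this
  -- assemble
  have hμ0 : 0 ≤ (∑ j ∈ Sin, bf j) / (nin:ℝ) :=
    div_nonneg (Finset.sum_nonneg hbf0) hninR.le
  have hμle : (∑ j ∈ Sin, bf j) / (nin:ℝ) ≤ Real.exp ((bb - aa)^2 / 8) := by
    rw [div_le_iff₀ hninR]
    linarith [hhoeff]
  have hS1 : (∫ ω, Real.exp (u ⬝ᵥ (K *ᵥ (probVec Sin - probVec (Sout ω)))))
      ≤ ((∑ j ∈ Sin, bf j) / (nin:ℝ))^nout := by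
    rw [hInt, Finset.sum_congr rfl (fun T hT => by rw [hFT T hT]), ← Finset.mul_sum]
    rw [div_pow]
    rw [le_div_iff₀ (by positivity)]
    calc (1 / Cn) * (∑ T ∈ 𝒯, ∏ j ∈ T, bf j) * (nin:ℝ)^nout
        = (1 / Cn) * ((∑ T ∈ 𝒯, ∏ j ∈ T, bf j) * (nin:ℝ)^nout) := by ring
      _ ≤ (1 / Cn) * (Cn * (∑ j ∈ Sin, bf j)^nout) := by
          apply mul_le_mul_of_nonneg_left hmac (by positivity)
      _ = (∑ j ∈ Sin, bf j)^nout := by field_simp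
  have hS2 : ((∑ j ∈ Sin, bf j) / (nin:ℝ))^nout
      ≤ Real.exp ((nout:ℝ) * ((bb - aa)^2 / 8)) := by
    rw [Real.exp_nat_mul]
    exact pow_le_pow_left₀ hμ0 hμle nout
  have hS3 : (nout:ℝ) * ((bb - aa)^2 / 8) ≤ M / (2 * (nout:ℝ)) * Q := by
    have hba : bb - aa = (vmax - vmin) / (nout:ℝ) := by
      rw [hbbdef, haadef]
      ring
    have h2 : (vmax - vmin)^2 ≤ 4 * (M * Q) := by nlinarith [hdmax, hd0, hR2, hR0]
    rw [hba, div_pow]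
    rw [show (nout:ℝ) * ((vmax - vmin)^2 / (nout:ℝ)^2 / 8)
        = (vmax - vmin)^2 / (8 * (nout:ℝ)) by field_simp]
    rw [show M / (2 * (nout:ℝ)) * Q = (4 * (M * Q)) / (8 * (nout:ℝ)) by field_simp; ring]
    gcongr
  calc (∫ ω, Real.exp (u ⬝ᵥ (K *ᵥ (probVec Sin - probVec (Sout ω)))))
      ≤ ((∑ j ∈ Sin, bf j) / (nin:ℝ))^nout := hS1
    _ ≤ Real.exp ((nout:ℝ) * ((bb - aa)^2 / 8)) := hS2
    _ ≤ Real.exp (M / (2 * (nout:ℝ)) * Q) := Real.exp_le_exp.mpr hS3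

end
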